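/- Let k be a perfect field and R = k[X_1,…,X_m,Y,Z,T]/(G) an affine domain, G = vY + h − f(Z,T), where v = ∏ p_i^{s_i} is a prime factorization in k[X_1,…,X_m], s_i > 1 for every i, and p_j² divides h for some j. If R is a regular ring, then k[Z,T]/(f(Z,T)) is a regular ring. -/

import Mathlib

noncomputable section
open MvPolynomial

/-- The embedding `k[X_1,…,X_m] → k[X_1,…,X_m,Y,Z,T]` (`Y,Z,T` are `Sum.inr 0,1,2`). -/
def embXv (k : Type) [Field k] (m : ℕ) :
    MvPolynomial (Fin m) k →ₐ[k] MvPolynomial (Fin m ⊕ Fin 3) k :=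
  rename Sum.inl

/-- The embedding `k[X_1,…,X_m,Z,T] → k[X_1,…,X_m,Y,Z,T]`. -/
def embHv (k : Type) [Field k] (m : ℕ) :
    MvPolynomial (Fin m ⊕ Fin 2) k →ₐ[k] MvPolynomial (Fin m ⊕ Fin 3) k :=
  rename (Sum.map id Fin.succ)

/-- The embedding `k[Z,T] → k[X_1,…,X_m,Y,Z,T]`. -/
def embFv (k : Type) [Field k] (m : ℕ) :
    MvPolynomial (Fin 2) k →ₐ[k] MvPolynomial (Fin m ⊕ Fin 3) k :=
  rename (fun j => Sum.inr j.succ)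

/-- The polynomial `G = v·Y + h - f(Z,T)` in `k[X_1,…,X_m,Y,Z,T]`. -/
def Gpoly (k : Type) [Field k] (m : ℕ) (v : MvPolynomial (Fin m) k)
    (h : MvPolynomial (Fin m ⊕ Fin 2) k) (f : MvPolynomial (Fin 2) k) :
    MvPolynomial (Fin m ⊕ Fin 3) k :=
  embXv k m v * MvPolynomial.X (Sum.inr 0) + embHv k m h - embFv k m f

/-- The Jacobian criterion for regularity of `k[X_1,…,X_m,Y,Z,T]/(G)` over a perfect
field `k`: the ideal generated by `G` and all its partial derivatives is the unit ideal. -/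
def JacRegular (k : Type) [Field k] (m : ℕ) (v : MvPolynomial (Fin m) k)
    (h : MvPolynomial (Fin m ⊕ Fin 2) k) (f : MvPolynomial (Fin 2) k) : Prop :=
  Ideal.span ({Gpoly k m v h f} ∪
      Set.range fun i : Fin m ⊕ Fin 3 => pderiv i (Gpoly k m v h f)) = ⊤

/-- The Jacobian criterion for regularity of `k[Z,T]/(f)` over a perfect field `k`. -/
def JacRegularf (k : Type) [Field k] (f : MvPolynomial (Fin 2) k) : Prop :=
  Ideal.span {f, pderiv 0 f, pderiv 1 f} = ⊤

lemma pderiv_rename_of_not_mem {σ τ R : Type*} [CommRing R]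
    (g : σ → τ) {j : τ} (hj : ∀ s, g s ≠ j) (φ : MvPolynomial σ R) :
    pderiv j (rename g φ) = 0 := by
  induction φ using MvPolynomial.induction_on with
  | C a => simp
  | add p q hp hq => simp [hp, hq]
  | mul_X q s hq => simp [map_mul, pderiv_mul, hq, pderiv_X_of_ne (hj s)]

lemma dvd_pderiv_of_sq_dvd {σ R : Type*} [CommRing R] {p a : MvPolynomial σ R}
    (h : p ^ 2 ∣ a) (i : σ) : p ∣ pderiv i a := by
  obtain ⟨b, rfl⟩ := h
  rw [sq, mul_assoc, pderiv_mul]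
  exact dvd_add ⟨pderiv i p * b, by ring⟩ (Dvd.intro _ rfl)

lemma descend_aux {k D : Type*} [Field k] [CommRing D] [Algebra k D] [Nontrivial D]
    (f g0 g1 : MvPolynomial (Fin 2) k)
    (h1 : (1 : MvPolynomial (Fin 2) D) ∈ Ideal.span
      {MvPolynomial.map (algebraMap k D) f, MvPolynomial.map (algebraMap k D) g0,
       MvPolynomial.map (algebraMap k D) g1}) :
    (1 : MvPolynomial (Fin 2) k) ∈ Ideal.span {f, g0, g1} := by
  rw [Ideal.mem_span_insert] at h1
  obtain ⟨a, z, hz, hza⟩ := h1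
  rw [Ideal.mem_span_insert] at hz
  obtain ⟨b, w, hw, hwb⟩ := hz
  rw [Ideal.mem_span_singleton] at hw
  obtain ⟨c, rfl⟩ := hw
  have hone : (1 : D) ≠ 0 := one_ne_zero
  have hker : LinearMap.ker (LinearMap.toSpanSingleton k D 1) = ⊥ := by
    rw [LinearMap.ker_eq_bot']
    intro c hc
    rcases smul_eq_zero.mp hc with hcc | hcc
    · exact hcc
    · exact absurd hcc hone
  obtain ⟨π, hπ⟩ := (LinearMap.toSpanSingleton k D 1).exists_leftInverse_of_injective hker
  have hπ1 : π 1 = 1 := by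
    have := LinearMap.congr_fun hπ 1
    simpa [LinearMap.toSpanSingleton_apply] using this
  set Pi2 : MvPolynomial (Fin 2) D → MvPolynomial (Fin 2) k :=
    fun q => AddMonoidAlgebra.ofCoeff (Finsupp.mapRange π (map_zero π) (AddMonoidAlgebra.coeff q)) with hPi2
  have hcoeff : ∀ (nn : Fin 2 →₀ ℕ) (q : MvPolynomial (Fin 2) D),
      coeff nn (Pi2 q) = π (coeff nn q) := fun nn q => rfl
  have hmul : ∀ (q : MvPolynomial (Fin 2) D) (g : MvPolynomial (Fin 2) k),
      Pi2 (q * MvPolynomial.map (algebraMap k D) g) = Pi2 q * g := by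
    intro q g
    apply MvPolynomial.ext
    intro nn
    rw [hcoeff, coeff_mul, coeff_mul, map_sum]
    refine Finset.sum_congr rfl fun x _ => ?_
    rw [hcoeff, coeff_map, mul_comm, ← Algebra.smul_def, map_smul, smul_eq_mul, mul_comm]
  have hadd : ∀ (q r : MvPolynomial (Fin 2) D), Pi2 (q + r) = Pi2 q + Pi2 r := by
    intro q r
    apply MvPolynomial.ext
    intro nn
    rw [hcoeff, coeff_add, coeff_add, hcoeff, hcoeff, map_add]
  have hPi21 : Pi2 (1 : MvPolynomial (Fin 2) D) = 1 := by
    apply MvPolynomial.ext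
    intro nn
    rw [hcoeff, coeff_one, coeff_one, apply_ite π, hπ1, map_zero]
  have : (1 : MvPolynomial (Fin 2) k) =
      Pi2 a * f + (Pi2 b * g0 + Pi2 c * g1) := by
    rw [← hPi21, hza, hwb, hadd, hadd, hmul, hmul,
      mul_comm (MvPolynomial.map (algebraMap k D) g1) c, hmul]
  rw [this]
  refine Ideal.add_mem _ (Ideal.mul_mem_left _ _ (Ideal.subset_span (by simp)))
    (Ideal.add_mem _ (Ideal.mul_mem_left _ _ (Ideal.subset_span (by simp)))
      (Ideal.mul_mem_left _ _ (Ideal.subset_span (by simp))))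

set_option maxHeartbeats 1000000 in
set_option synthInstance.maxHeartbeats 400000 in
/-- Lemma 3.9, case (II)(a). If `v = ∏ pᵢ^{sᵢ}` with every `sᵢ > 1` and
`p_j² ∣ h` for some `j`, and `R = k[X_1,…,X_m,Y,Z,T]/(G)` is regular, then `k[Z,T]/(f)`
is regular. -/
theorem stmt10 (k : Type) [Field k] [PerfectField k] (m : ℕ)
    (v : MvPolynomial (Fin m) k) (h : MvPolynomial (Fin m ⊕ Fin 2) k)
    (f : MvPolynomial (Fin 2) k)
    (hdom : (Ideal.span {Gpoly k m v h f}).IsPrime)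
    (n : ℕ) (p : Fin n → MvPolynomial (Fin m) k) (s : Fin n → ℕ)
    (hprime : ∀ i, Prime (p i)) (hs : ∀ i, 1 < s i)
    (hdist : ∀ i j, i ≠ j → ¬ Associated (p i) (p j))
    (hfact : v = ∏ i, p i ^ s i)
    (j : Fin n)
    (hdvd : (rename (Sum.inl : Fin m → Fin m ⊕ Fin 2) (p j)) ^ 2 ∣ h)
    (hreg : JacRegular k m v h f) :
    JacRegularf k f := by
  classical
  set P : MvPolynomial (Fin m ⊕ Fin 3) k := embXv k m (p j) with hPdef
  have hP2v : P ^ 2 ∣ embXv k m v := by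
    have hd : p j ^ 2 ∣ v := by
      rw [hfact]
      exact dvd_trans (pow_dvd_pow _ (hs j)) (Finset.dvd_prod_of_mem _ (Finset.mem_univ j))
    simpa [map_pow] using map_dvd (embXv k m) hd
  have hP2h : P ^ 2 ∣ embHv k m h := by
    have h2 := map_dvd (embHv k m) hdvd
    rw [map_pow] at h2
    have he : embHv k m (rename Sum.inl (p j)) = P := by
      show rename (Sum.map id Fin.succ) (rename Sum.inl (p j)) = rename Sum.inl (p j)
      rw [rename_rename]
      rfl
    rwa [he] at h2
  set J : Ideal (MvPolynomial (Fin m ⊕ Fin 3) k) :=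
    Ideal.span {P, embFv k m f, embFv k m (pderiv 0 f), embFv k m (pderiv 1 f)} with hJdef
  have hPJ : P ∈ J := Ideal.subset_span (by simp)
  have hdvdJ : ∀ x : MvPolynomial (Fin m ⊕ Fin 3) k, P ∣ x → x ∈ J := by
    rintro x ⟨c, rfl⟩; exact Ideal.mul_mem_right _ _ hPJ
  have hPP : P ∣ P ^ 2 := dvd_pow_self P two_ne_zero
  have hinjF : Function.Injective (fun j : Fin 2 => (Sum.inr j.succ : Fin m ⊕ Fin 3)) :=
    fun a b hab => Fin.succ_injective _ (Sum.inr_injective hab)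
  have hle : Ideal.span ({Gpoly k m v h f} ∪
      Set.range fun i : Fin m ⊕ Fin 3 => pderiv i (Gpoly k m v h f)) ≤ J := by
    rw [Ideal.span_le]
    rintro x (hx | ⟨i, rfl⟩)
    · rw [Set.mem_singleton_iff] at hx; subst hx
      unfold Gpoly
      exact Ideal.sub_mem _
        (Ideal.add_mem _ (Ideal.mul_mem_right _ _ (hdvdJ _ (hPP.trans hP2v)))
          (hdvdJ _ (hPP.trans hP2h)))
        (Ideal.subset_span (by simp))
    · unfold Gpoly
      beta_reduce
      rw [map_sub, map_add, pderiv_mul]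
      obtain i0 | t := i
      · have h1 : pderiv (Sum.inl i0 : Fin m ⊕ Fin 3)
            (X (Sum.inr 0) : MvPolynomial (Fin m ⊕ Fin 3) k) = 0 :=
          pderiv_X_of_ne (by simp)
        have h2 : pderiv (Sum.inl i0) (embFv k m f) = 0 :=
          pderiv_rename_of_not_mem _ (fun s => by simp) f
        rw [h1, h2, mul_zero, add_zero, sub_zero]
        exact Ideal.add_mem _
          (Ideal.mul_mem_right _ _ (hdvdJ _ (dvd_pderiv_of_sq_dvd hP2v _)))
          (hdvdJ _ (dvd_pderiv_of_sq_dvd hP2h _))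
      · obtain ht | ht | ht : t = 0 ∨ t = 1 ∨ t = 2 := by revert t; decide
        · subst ht
          have h1 : pderiv (Sum.inr 0 : Fin m ⊕ Fin 3) (embXv k m v) = 0 :=
            pderiv_rename_of_not_mem _ (fun s => by simp) v
          have h2 : pderiv (Sum.inr 0 : Fin m ⊕ Fin 3)
              (X (Sum.inr 0) : MvPolynomial (Fin m ⊕ Fin 3) k) = 1 := pderiv_X_self _
          have h3 : pderiv (Sum.inr 0) (embHv k m h) = 0 :=
            pderiv_rename_of_not_mem _
              (fun s => by cases s <;> simp [Fin.succ_ne_zero]) h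
          have h4 : pderiv (Sum.inr 0) (embFv k m f) = 0 :=
            pderiv_rename_of_not_mem _ (fun s => by simp [Fin.succ_ne_zero]) f
          rw [h1, h2, h3, h4, mul_one, zero_mul, zero_add, add_zero, sub_zero]
          exact hdvdJ _ (hPP.trans hP2v)
        · subst ht
          have h1 : pderiv (Sum.inr 1 : Fin m ⊕ Fin 3) (embXv k m v) = 0 :=
            pderiv_rename_of_not_mem _ (fun s => by simp) v
          have h2 : pderiv (Sum.inr 1 : Fin m ⊕ Fin 3)
              (X (Sum.inr 0) : MvPolynomial (Fin m ⊕ Fin 3) k) = 0 :=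
            pderiv_X_of_ne (by simp)
          have h4 : pderiv (Sum.inr 1) (embFv k m f) = embFv k m (pderiv 0 f) :=
            pderiv_rename (p := f) hinjF 0
          rw [h1, h2, h4, mul_zero, zero_mul, add_zero, zero_add]
          exact Ideal.sub_mem _ (hdvdJ _ (dvd_pderiv_of_sq_dvd hP2h _))
            (Ideal.subset_span (by simp))
        · subst ht
          have h1 : pderiv (Sum.inr 2 : Fin m ⊕ Fin 3) (embXv k m v) = 0 :=
            pderiv_rename_of_not_mem _ (fun s => by simp) v
          have h2 : pderiv (Sum.inr 2 : Fin m ⊕ Fin 3)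
              (X (Sum.inr 0) : MvPolynomial (Fin m ⊕ Fin 3) k) = 0 :=
            pderiv_X_of_ne (by simp)
          have h4 : pderiv (Sum.inr 2) (embFv k m f) = embFv k m (pderiv 1 f) :=
            pderiv_rename (p := f) hinjF 1
          rw [h1, h2, h4, mul_zero, zero_mul, add_zero, zero_add]
          exact Ideal.sub_mem _ (hdvdJ _ (dvd_pderiv_of_sq_dvd hP2h _))
            (Ideal.subset_span (by simp))
  have hJtop : J = ⊤ := top_unique (hreg ▸ hle)
  -- quotient ring
  set I0 : Ideal (MvPolynomial (Fin m) k) := Ideal.span {p j} with hI0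
  have hI0ne : I0 ≠ ⊤ := by
    simp only [hI0, ne_eq, Ideal.span_singleton_eq_top]
    exact (hprime j).not_unit
  set D := MvPolynomial (Fin m) k ⧸ I0 with hD
  haveI : Nontrivial D := Ideal.Quotient.nontrivial_iff.mpr hI0ne
  set gv : Fin m ⊕ Fin 3 → MvPolynomial (Fin 2) D :=
    Sum.elim (fun i => C (Ideal.Quotient.mk I0 (X i))) ![0, X 0, X 1] with hgv
  set Φ : MvPolynomial (Fin m ⊕ Fin 3) k →ₐ[k] MvPolynomial (Fin 2) D := aeval gv with hΦ
  have hΦX : ∀ a : MvPolynomial (Fin m) k,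
      Φ (embXv k m a) = C (Ideal.Quotient.mk I0 a) := by
    intro a
    have : Φ.comp (embXv k m) =
        ((IsScalarTower.toAlgHom k D (MvPolynomial (Fin 2) D)).comp
          (Ideal.Quotient.mkₐ k I0)) := by
      apply MvPolynomial.algHom_ext
      intro i
      simp only [hΦ, embXv, hgv, AlgHom.coe_comp, Function.comp_apply, rename_X, aeval_X,
        Sum.elim_inl, IsScalarTower.coe_toAlgHom', MvPolynomial.algebraMap_eq,
        Ideal.Quotient.mkₐ_eq_mk]
      rfl
    have := congrArg (fun ψ => ψ a) this
    simp only [AlgHom.coe_comp, Function.comp_apply] at this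
    exact this
  have hΦF : ∀ g : MvPolynomial (Fin 2) k,
      Φ (embFv k m g) = MvPolynomial.map (algebraMap k D) g := by
    intro g
    have : Φ.comp (embFv k m) =
        (mapAlgHom (Algebra.ofId k D) :
          MvPolynomial (Fin 2) k →ₐ[k] MvPolynomial (Fin 2) D) := by
      apply MvPolynomial.algHom_ext
      intro i
      fin_cases i <;> simp [hΦ, embFv, hgv]
    have := congrArg (fun ψ => ψ g) this
    simpa [mapAlgHom_apply] using this
  have hΦP : Φ P = 0 := by
    have hz : Ideal.Quotient.mk I0 (p j) = 0 :=
      Ideal.Quotient.eq_zero_iff_mem.mpr (by rw [hI0]; exact Ideal.mem_span_singleton_self _)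
    rw [hPdef, hΦX, hz, map_zero]
  have h1mem : (1 : MvPolynomial (Fin 2) D) ∈ Ideal.span
      {MvPolynomial.map (algebraMap k D) f, MvPolynomial.map (algebraMap k D) (pderiv 0 f),
       MvPolynomial.map (algebraMap k D) (pderiv 1 f)} := by
    have hmap : Ideal.map (Φ : MvPolynomial (Fin m ⊕ Fin 3) k →+* MvPolynomial (Fin 2) D) J
        = ⊤ := by
      rw [hJtop, Ideal.map_top]
    rw [hJdef, Ideal.map_span] at hmap
    have himg : (Φ : MvPolynomial (Fin m ⊕ Fin 3) k →+* MvPolynomial (Fin 2) D) ''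
        {P, embFv k m f, embFv k m (pderiv 0 f), embFv k m (pderiv 1 f)} =
        {(0 : MvPolynomial (Fin 2) D), MvPolynomial.map (algebraMap k D) f,
         MvPolynomial.map (algebraMap k D) (pderiv 0 f),
         MvPolynomial.map (algebraMap k D) (pderiv 1 f)} := by
      simp only [Set.image_insert_eq, Set.image_singleton]
      rw [show ((Φ : MvPolynomial (Fin m ⊕ Fin 3) k →+* MvPolynomial (Fin 2) D) P) = 0 from hΦP,
        show ((Φ : MvPolynomial (Fin m ⊕ Fin 3) k →+* MvPolynomial (Fin 2) D)
          (embFv k m f)) = MvPolynomial.map (algebraMap k D) f from hΦF f,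
        show ((Φ : MvPolynomial (Fin m ⊕ Fin 3) k →+* MvPolynomial (Fin 2) D)
          (embFv k m (pderiv 0 f))) = MvPolynomial.map (algebraMap k D) (pderiv 0 f) from hΦF _,
        show ((Φ : MvPolynomial (Fin m ⊕ Fin 3) k →+* MvPolynomial (Fin 2) D)
          (embFv k m (pderiv 1 f))) = MvPolynomial.map (algebraMap k D) (pderiv 1 f) from hΦF _]
    rw [himg] at hmap
    have h1' : (1 : MvPolynomial (Fin 2) D) ∈ Ideal.span
        {(0 : MvPolynomial (Fin 2) D), MvPolynomial.map (algebraMap k D) f,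
         MvPolynomial.map (algebraMap k D) (pderiv 0 f),
         MvPolynomial.map (algebraMap k D) (pderiv 1 f)} := hmap ▸ Submodule.mem_top
    rw [Ideal.mem_span_insert] at h1'
    obtain ⟨a, z, hzmem, hz1⟩ := h1'
    rw [mul_zero, zero_add] at hz1
    exact hz1 ▸ hzmem
  exact Ideal.eq_top_iff_one _ |>.mpr (descend_aux f (pderiv 0 f) (pderiv 1 f) h1mem)
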